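/- Let τ ∈ C_b(ℝ), let A_τ be the Segal algebra corresponding to τ with norm ‖·‖_τ, let w be a continuous positive function on ℝ such that w and w⁻¹ = 1/w are bounded, and let α be an aperiodic homeomorphism of ℝ with τ∘α = τ, so that T̃_{α,w}(f) = w·(f∘α) is an invertible bounded linear operator on A_τ. Then the following are equivalent: (1) T̃_{α,w} is topologically semi-transitive on A_τ; (2) for each ε ∈ (0,1) and every compact subset K of |τ|⁻¹([0,ε]) there exists a strictly increasing sequence (n_k) of natural numbers such that lim_{k→∞} [ ( sup_{t∈K} ∏_{j=0}^{n_k−1} w(α^{j−n_k}(t)) ) · ( sup_{t∈K} ∏_{j=0}^{n_k−1} (w(α^j(t)))⁻¹ ) ] = 0. -/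

import Mathlib

open Filter Finset

/-- A bounded linear operator `T` on a complex normed space is *topologically
semi-transitive* if for every pair of nonempty open subsets `O₁, O₂` there exist
`n ∈ ℕ` and `λ ∈ ℂ \ {0}` such that `λ • T^n(O₁) ∩ O₂ ≠ ∅`. -/
def IsSemiTransitive {E : Type*} [NormedAddCommGroup E] [NormedSpace ℂ E]
    (T : E →L[ℂ] E) : Prop :=
  ∀ O₁ O₂ : Set E, IsOpen O₁ → IsOpen O₂ → O₁.Nonempty → O₂.Nonempty →
    ∃ (n : ℕ) (lam : ℂ), 1 ≤ n ∧ lam ≠ 0 ∧ ∃ f ∈ O₁, lam • (T ^ n) f ∈ O₂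

private lemma iter_cancel (α : ℝ ≃ₜ ℝ) : ∀ (n : ℕ) (x : ℝ), (⇑α)^[n] ((⇑α.symm)^[n] x) = x := by
  intro n
  induction n with
  | zero => intro x; simp
  | succ n ih =>
    intro x
    rw [Function.iterate_succ_apply' (⇑α.symm) n x, Function.iterate_succ_apply (⇑α) n,
      α.apply_symm_apply, ih]

private lemma iter_cancel' (α : ℝ ≃ₜ ℝ) : ∀ (n : ℕ) (x : ℝ),
    (⇑α.symm)^[n] ((⇑α)^[n] x) = x := by
  intro n
  induction n with
  | zero => intro x; simp
  | succ n ih =>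
    intro x
    rw [Function.iterate_succ_apply' (⇑α) n x, Function.iterate_succ_apply (⇑α.symm) n,
      α.symm_apply_apply, ih]

private lemma iter_mixed (α : ℝ ≃ₜ ℝ) {j n : ℕ} (h : j ≤ n) (x : ℝ) :
    (⇑α)^[j] ((⇑α.symm)^[n] x) = (⇑α.symm)^[n - j] x := by
  conv_lhs => rw [show n = j + (n - j) from (Nat.add_sub_cancel' h).symm,
    Function.iterate_add_apply]
  rw [iter_cancel]

private lemma iter_mixed' (α : ℝ ≃ₜ ℝ) {j n : ℕ} (h : j ≤ n) (x : ℝ) :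
    (⇑α.symm)^[j] ((⇑α)^[n] x) = (⇑α)^[n - j] x := by
  conv_lhs => rw [show n = j + (n - j) from (Nat.add_sub_cancel' h).symm,
    Function.iterate_add_apply]
  rw [iter_cancel']

set_option maxHeartbeats 1000000 in
/-- Characterization of topologically semi-transitive weighted composition operators on
the Segal algebra `A_τ = { f ∈ C₀(ℝ) : Σ_k ‖f·τ^k‖_∞ < ∞ }` with the norm
`‖f‖_τ = Σ_k ‖f·τ^k‖_∞`.  The Banach space `𝓐` together with the injective linear map
`ι` realizes `A_τ` as a space of functions on `ℝ`. -/
theorem semi_transitive_iff_weight_condition_segal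
    (τ : ℝ → ℂ) (hτ_cont : Continuous τ) (hτ_bdd : ∃ C, ∀ t, ‖τ t‖ ≤ C)
    {𝓐 : Type*} [NormedAddCommGroup 𝓐] [NormedSpace ℂ 𝓐] [CompleteSpace 𝓐]
    (ι : 𝓐 →ₗ[ℂ] (ℝ → ℂ)) (hι_inj : Function.Injective ι)
    (hrange : ∀ g : ℝ → ℂ, (∃ f : 𝓐, ι f = g) ↔
      (Continuous g ∧ Tendsto g (cocompact ℝ) (nhds 0) ∧
        Summable (fun k : ℕ => ⨆ t : ℝ, ‖g t * (τ t) ^ k‖)))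
    (hnorm : ∀ f : 𝓐, ‖f‖ = ∑' k : ℕ, ⨆ t : ℝ, ‖ι f t * (τ t) ^ k‖)
    (α : ℝ ≃ₜ ℝ)
    (haper : ∀ K : Set ℝ, IsCompact K →
      ∃ N : ℕ, 0 < N ∧ ∀ n ≥ N, ((⇑α)^[n] '' K) ∩ K = ∅)
    (hτα : ∀ t, τ (α t) = τ t)
    (w : ℝ → ℝ) (hw_cont : Continuous w) (hw_pos : ∀ t, 0 < w t)
    (hw_bdd : ∃ C, ∀ t, w t ≤ C) (hw_inv_bdd : ∃ C, ∀ t, (w t)⁻¹ ≤ C)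
    (T S : 𝓐 →L[ℂ] 𝓐)
    (hT : ∀ (f : 𝓐) (t : ℝ), ι (T f) t = (w t : ℂ) * ι f (α t))
    (hST : ∀ f, S (T f) = f) (hTS : ∀ f, T (S f) = f) :
    IsSemiTransitive T ↔
      ∀ ε : ℝ, 0 < ε → ε < 1 → ∀ K : Set ℝ, IsCompact K →
        (∀ t ∈ K, ‖τ t‖ ≤ ε) →
        ∃ n : ℕ → ℕ, StrictMono n ∧ (∀ k, 1 ≤ n k) ∧
          Tendsto (fun k =>
              sSup ((fun t => ∏ j ∈ range (n k), w ((⇑α.symm)^[n k - j] t)) '' K) *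
              sSup ((fun t => ∏ j ∈ range (n k), (w ((⇑α)^[j] t))⁻¹) '' K))
            atTop (nhds 0) := by
  obtain ⟨Cτ, hCτ⟩ := hτ_bdd
  -- membership facts
  have hmem : ∀ f : 𝓐, Continuous (ι f) ∧ Tendsto (ι f) (cocompact ℝ) (nhds 0) ∧
      Summable (fun k : ℕ => ⨆ t : ℝ, ‖ι f t * (τ t) ^ k‖) :=
    fun f => (hrange (ι f)).mp ⟨f, rfl⟩
  -- boundedness of ι f
  have hgbdd : ∀ f : 𝓐, ∃ M : ℝ, 0 ≤ M ∧ ∀ t, ‖ι f t‖ ≤ M := by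
    intro f
    have h1 : Tendsto (fun t => ‖ι f t‖) (cocompact ℝ) (nhds 0) := by
      simpa using (hmem f).2.1.norm
    have h2 : ∀ᶠ t in cocompact ℝ, ‖ι f t‖ < 1 :=
      h1.eventually_lt_const one_pos
    obtain ⟨s, hs, hsub⟩ := mem_cocompact.mp h2
    obtain ⟨B, hB⟩ := (hs.image (continuous_norm.comp (hmem f).1)).bddAbove
    refine ⟨max B 1, le_trans zero_le_one (le_max_right _ _), fun t => ?_⟩
    by_cases ht : t ∈ s
    · exact le_trans (hB ⟨t, ht, rfl⟩) (le_max_left _ _)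
    · exact le_trans (le_of_lt (hsub ht)) (le_max_right _ _)
  have hbddA : ∀ (f : 𝓐) (k : ℕ), BddAbove (Set.range fun t => ‖ι f t * τ t ^ k‖) := by
    intro f k
    obtain ⟨M, hM0, hM⟩ := hgbdd f
    refine ⟨M * (max 1 Cτ) ^ k, ?_⟩
    rintro x ⟨t, rfl⟩
    simp only [norm_mul, norm_pow]
    have h1 : ‖τ t‖ ≤ max 1 Cτ := le_trans (hCτ t) (le_max_right _ _)
    have h2 : (0:ℝ) ≤ max 1 Cτ := le_trans zero_le_one (le_max_left _ _)
    exact mul_le_mul (hM t) (pow_le_pow_left₀ (norm_nonneg _) h1 k)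
      (pow_nonneg (norm_nonneg _) k) hM0
  have hsk_nonneg : ∀ (f : 𝓐) (k : ℕ), 0 ≤ ⨆ t : ℝ, ‖ι f t * τ t ^ k‖ :=
    fun f k => Real.iSup_nonneg fun t => norm_nonneg _
  have hptw : ∀ (f : 𝓐) (t : ℝ), ‖ι f t‖ ≤ ‖f‖ := by
    intro f t
    have h0 : ‖ι f t‖ = ‖ι f t * τ t ^ 0‖ := by simp
    rw [h0, hnorm f]
    exact le_trans (le_ciSup (hbddA f 0) t)
      (Summable.le_tsum (hmem f).2.2 0 fun k _ => hsk_nonneg f k)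
  -- invariance of τ
  have hτiter : ∀ (n : ℕ) (t : ℝ), τ ((⇑α)^[n] t) = τ t := by
    intro n
    induction n with
    | zero => intro t; simp
    | succ n ih =>
      intro t
      rw [Function.iterate_succ_apply' (⇑α) n t, hτα, ih]
  have hτsymiter : ∀ (n : ℕ) (t : ℝ), τ ((⇑α.symm)^[n] t) = τ t := by
    have hτsym : ∀ t, τ (α.symm t) = τ t := by
      intro t
      have := hτα (α.symm t)
      rw [α.apply_symm_apply] at this
      exact this.symm
    intro n
    induction n with
    | zero => intro t; simp
    | succ n ih =>
      intro t
      rw [Function.iterate_succ_apply' (⇑α.symm) n t, hτsym, ih]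
  -- iterates of T and S
  have hTpow : ∀ (n : ℕ) (f : 𝓐) (t : ℝ),
      ι ((T ^ n) f) t = (↑(∏ j ∈ range n, w ((⇑α)^[j] t)) : ℂ) * ι f ((⇑α)^[n] t) := by
    intro n
    induction n with
    | zero => intro f t; simp
    | succ n ih =>
      intro f t
      rw [pow_succ, ContinuousLinearMap.mul_apply, ih, hT, prod_range_succ,
        Function.iterate_succ_apply' (⇑α) n t]
      push_cast
      ring
  have hSfun : ∀ (f : 𝓐) (t : ℝ),
      ι (S f) t = ((w (α.symm t) : ℂ))⁻¹ * ι f (α.symm t) := by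
    intro f t
    have hne : ((w (α.symm t) : ℂ)) ≠ 0 := by
      exact_mod_cast (hw_pos (α.symm t)).ne'
    have h := hT (S f) (α.symm t)
    rw [hTS, α.apply_symm_apply] at h
    rw [h, inv_mul_cancel_left₀ hne]
  have hSpow : ∀ (n : ℕ) (f : 𝓐) (t : ℝ),
      ι ((S ^ n) f) t
        = (∏ j ∈ range n, ((w ((⇑α.symm)^[j+1] t) : ℂ))⁻¹) * ι f ((⇑α.symm)^[n] t) := by
    intro n
    induction n with
    | zero => intro f t; simp
    | succ n ih =>
      intro f t
      rw [pow_succ, ContinuousLinearMap.mul_apply, ih, hSfun, prod_range_succ,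
        Function.iterate_succ_apply' (⇑α.symm) n t]
      ring
  have hTSpow : ∀ (n : ℕ) (f : 𝓐), (T ^ n) ((S ^ n) f) = f := by
    intro n
    induction n with
    | zero => intro f; simp
    | succ n ih =>
      intro f
      rw [pow_succ, pow_succ', ContinuousLinearMap.mul_apply,
        ContinuousLinearMap.mul_apply, hTS, ih]
  have hSTpow : ∀ (n : ℕ) (f : 𝓐), (S ^ n) ((T ^ n) f) = f := by
    intro n
    induction n with
    | zero => intro f; simp
    | succ n ih =>
      intro f
      rw [pow_succ, pow_succ', ContinuousLinearMap.mul_apply,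
        ContinuousLinearMap.mul_apply, hST, ih]
  have hsk_nonneg' : ∀ (g : ℝ → ℂ) (k : ℕ), 0 ≤ ⨆ t : ℝ, ‖g t * τ t ^ k‖ :=
    fun g k => Real.iSup_nonneg fun t => norm_nonneg _
  -- constructing elements of 𝓐 out of compactly supported functions
  have hmk : ∀ (g : ℝ → ℂ), Continuous g → HasCompactSupport g →
      (∃ ε' : ℝ, 0 ≤ ε' ∧ ε' < 1 ∧ ∀ t, g t ≠ 0 → ‖τ t‖ ≤ ε') →
      ∃ F : 𝓐, ι F = g := by
    rintro g hc hcs ⟨ε', hε'0, hε'1, hτb⟩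
    rw [hrange]
    refine ⟨hc, ?_, ?_⟩
    · have hev : g =ᶠ[cocompact ℝ] (fun _ => 0) := by
        refine mem_cocompact.mpr ⟨tsupport g, hcs, fun t ht => ?_⟩
        exact image_eq_zero_of_notMem_tsupport ht
      exact tendsto_const_nhds.congr' hev.symm
    · obtain ⟨B, hB⟩ := (hcs.image (continuous_norm.comp hc)).bddAbove
      have hM : ∀ t, ‖g t‖ ≤ max B 0 := by
        intro t
        by_cases ht : t ∈ tsupport g
        · exact le_trans (hB ⟨t, ht, rfl⟩) (le_max_left _ _)
        · rw [image_eq_zero_of_notMem_tsupport ht]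
          simp
      refine Summable.of_nonneg_of_le (fun k => hsk_nonneg' g k)
        (fun k => ?_) ((summable_geometric_of_lt_one hε'0 hε'1).mul_left (max B 0))
      refine Real.iSup_le (fun t => ?_)
        (mul_nonneg (le_max_right _ _) (pow_nonneg hε'0 k))
      by_cases hg : g t = 0
      · rw [hg]
        simpa using mul_nonneg (le_max_right B 0) (pow_nonneg hε'0 k)
      · rw [norm_mul, norm_pow]
        exact mul_le_mul (hM t) (pow_le_pow_left₀ (norm_nonneg _) (hτb t hg) k)
          (pow_nonneg (norm_nonneg _) k) (le_max_right _ _)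
  -- continuity of the weight products
  have prodA_cont : ∀ n : ℕ, Continuous (fun t => ∏ j ∈ range n, w ((⇑α.symm)^[n-j] t)) := by
    intro n
    exact continuous_finset_prod _ fun j _ =>
      hw_cont.comp ((α.symm.continuous).iterate _)
  have prodB_cont : ∀ n : ℕ, Continuous (fun t => ∏ j ∈ range n, (w ((⇑α)^[j] t))⁻¹) := by
    intro n
    refine continuous_finset_prod _ fun j _ => ?_
    exact (hw_cont.comp ((α.continuous).iterate _)).inv₀ fun t => (hw_pos _).ne'
  have prodA_pos : ∀ (n : ℕ) (t : ℝ), 0 < ∏ j ∈ range n, w ((⇑α.symm)^[n-j] t) :=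
    fun n t => Finset.prod_pos fun j _ => hw_pos _
  have prodB_pos : ∀ (n : ℕ) (t : ℝ), 0 < ∏ j ∈ range n, (w ((⇑α)^[j] t))⁻¹ :=
    fun n t => Finset.prod_pos fun j _ => inv_pos.mpr (hw_pos _)
  -- norm bounds for iterates with supported functions
  have hTbound : ∀ (n : ℕ) (K : Set ℝ), IsCompact K → K.Nonempty → ∀ f : 𝓐,
      (∀ s, ι f s ≠ 0 → s ∈ K) →
      ‖(T ^ n) f‖ ≤ sSup ((fun t => ∏ j ∈ range n, w ((⇑α.symm)^[n-j] t)) '' K) * ‖f‖ := by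
    intro n K hK hKne f hsupp
    set P : ℝ → ℝ := fun t => ∏ j ∈ range n, w ((⇑α.symm)^[n-j] t) with hPdef
    have hbddP : BddAbove (P '' K) := (hK.image (prodA_cont n)).bddAbove
    obtain ⟨s₀, hs₀⟩ := hKne
    have ha_nonneg : 0 ≤ sSup (P '' K) :=
      le_trans (le_of_lt (prodA_pos n s₀)) (le_csSup hbddP ⟨s₀, hs₀, rfl⟩)
    rw [hnorm ((T^n) f), hnorm f, ← tsum_mul_left]
    refine Summable.tsum_le_tsum (fun k => ?_) (hmem _).2.2 ((hmem f).2.2.mul_left _)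
    refine Real.iSup_le (fun t => ?_) (mul_nonneg ha_nonneg (hsk_nonneg f k))
    rw [hTpow]
    by_cases h0 : ι f ((⇑α)^[n] t) = 0
    · rw [h0]
      simpa using mul_nonneg ha_nonneg (hsk_nonneg f k)
    · have hsK : (⇑α)^[n] t ∈ K := hsupp _ h0
      have ht : t = (⇑α.symm)^[n] ((⇑α)^[n] t) := (iter_cancel' α n t).symm
      have hprod : ∏ j ∈ range n, w ((⇑α)^[j] t) = P ((⇑α)^[n] t) := by
        rw [hPdef]
        refine Finset.prod_congr rfl fun j hj => ?_
        conv_lhs => rw [ht]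
        rw [iter_mixed α (le_of_lt (mem_range.mp hj))]
      have hτt : τ t = τ ((⇑α)^[n] t) := (hτiter n t).symm
      rw [hτt, mul_assoc, norm_mul, Complex.norm_real, Real.norm_eq_abs,
        abs_of_pos (Finset.prod_pos fun j _ => hw_pos _)]
      refine mul_le_mul ?_ (le_ciSup (hbddA f k) ((⇑α)^[n] t)) (norm_nonneg _) ha_nonneg
      rw [hprod]
      exact le_csSup hbddP ⟨(⇑α)^[n] t, hsK, rfl⟩
  have hSbound : ∀ (n : ℕ) (K : Set ℝ), IsCompact K → K.Nonempty → ∀ f : 𝓐,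
      (∀ s, ι f s ≠ 0 → s ∈ K) →
      ‖(S ^ n) f‖ ≤ sSup ((fun t => ∏ j ∈ range n, (w ((⇑α)^[j] t))⁻¹) '' K) * ‖f‖ := by
    intro n K hK hKne f hsupp
    set Q : ℝ → ℝ := fun t => ∏ j ∈ range n, (w ((⇑α)^[j] t))⁻¹ with hQdef
    have hbddQ : BddAbove (Q '' K) := (hK.image (prodB_cont n)).bddAbove
    obtain ⟨s₀, hs₀⟩ := hKne
    have hb_nonneg : 0 ≤ sSup (Q '' K) :=
      le_trans (le_of_lt (prodB_pos n s₀)) (le_csSup hbddQ ⟨s₀, hs₀, rfl⟩)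
    rw [hnorm ((S^n) f), hnorm f, ← tsum_mul_left]
    refine Summable.tsum_le_tsum (fun k => ?_) (hmem _).2.2 ((hmem f).2.2.mul_left _)
    refine Real.iSup_le (fun t => ?_) (mul_nonneg hb_nonneg (hsk_nonneg f k))
    rw [hSpow]
    by_cases h0 : ι f ((⇑α.symm)^[n] t) = 0
    · rw [h0]
      simpa using mul_nonneg hb_nonneg (hsk_nonneg f k)
    · have hsK : (⇑α.symm)^[n] t ∈ K := hsupp _ h0
      have ht : t = (⇑α)^[n] ((⇑α.symm)^[n] t) := (iter_cancel α n t).symm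
      have hcast : (∏ j ∈ range n, ((w ((⇑α.symm)^[j+1] t) : ℂ))⁻¹)
          = ((∏ j ∈ range n, (w ((⇑α.symm)^[j+1] t))⁻¹ : ℝ) : ℂ) := by
        push_cast
        rfl
      have hprod : ∏ j ∈ range n, (w ((⇑α.symm)^[j+1] t))⁻¹ = Q ((⇑α.symm)^[n] t) := by
        rw [hQdef]
        have hcg : ∀ j ∈ range n,
            (w ((⇑α.symm)^[j+1] t))⁻¹ = (w ((⇑α)^[n - 1 - j] ((⇑α.symm)^[n] t)))⁻¹ := by
          intro j hj
          have hj' : j + 1 ≤ n := mem_range.mp hj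
          have h1 : n - (j+1) = n - 1 - j := by omega
          conv_lhs => rw [ht]
          rw [iter_mixed' α hj', h1]
        rw [Finset.prod_congr rfl hcg]
        exact Finset.prod_range_reflect (fun j => (w ((⇑α)^[j] ((⇑α.symm)^[n] t)))⁻¹) n
      have hτt : τ t = τ ((⇑α.symm)^[n] t) := (hτsymiter n t).symm
      rw [hτt, hcast, mul_assoc, norm_mul, Complex.norm_real, Real.norm_eq_abs,
        abs_of_pos (Finset.prod_pos fun j _ => inv_pos.mpr (hw_pos _))]
      refine mul_le_mul ?_ (le_ciSup (hbddA f k) ((⇑α.symm)^[n] t)) (norm_nonneg _) hb_nonneg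
      rw [hprod]
      exact le_csSup hbddQ ⟨(⇑α.symm)^[n] t, hsK, rfl⟩
  -- approximation by compactly supported elements
  have happrox : ∀ (f₀ : 𝓐) (δ : ℝ), 0 < δ → ∃ (f₁ : 𝓐) (K₁ : Set ℝ) (ε₁ : ℝ),
      IsCompact K₁ ∧ 0 < ε₁ ∧ ε₁ < 1 ∧ (∀ t ∈ K₁, ‖τ t‖ ≤ ε₁) ∧
      (∀ s, ι f₁ s ≠ 0 → s ∈ K₁) ∧ ‖f₀ - f₁‖ < δ := by
    intro f₀ δ hδ
    obtain ⟨hgc, hg0, hgsum⟩ := hmem f₀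
    set s : ℕ → ℝ := fun k => ⨆ t : ℝ, ‖ι f₀ t * τ t ^ k‖ with hsdef
    -- tail of the series
    have htail : Tendsto (fun m => ∑' k, s (k + m)) atTop (nhds 0) := tendsto_sum_nat_add s
    obtain ⟨m, hm⟩ := (htail.eventually_lt_const (half_pos hδ)).exists
    set δ' : ℝ := δ / (2 * (m + 1)) with hδ'def
    have hδ'pos : 0 < δ' := by positivity
    -- ι f₀ vanishes where |τ| ≥ 1
    have hvanish : ∀ x, 1 ≤ ‖τ x‖ → ι f₀ x = 0 := by
      intro x hx
      have h1 : ∀ k : ℕ, ‖ι f₀ x‖ ≤ s k := by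
        intro k
        calc ‖ι f₀ x‖ ≤ ‖ι f₀ x‖ * ‖τ x‖ ^ k :=
              le_mul_of_one_le_right (norm_nonneg _) (one_le_pow₀ hx)
          _ = ‖ι f₀ x * τ x ^ k‖ := by
              simp [norm_mul, norm_pow]
          _ ≤ s k := le_ciSup (hbddA f₀ k) x
      have h2 : Tendsto s atTop (nhds 0) := hgsum.tendsto_atTop_zero
      have h3 : ‖ι f₀ x‖ ≤ 0 := ge_of_tendsto h2 (Eventually.of_forall h1)
      simpa using le_antisymm h3 (norm_nonneg _)
    set Cm : ℝ := (max 1 Cτ) ^ m with hCmdef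
    have hCm1 : (1:ℝ) ≤ Cm := one_le_pow₀ (le_max_left _ _)
    set δ'' : ℝ := δ' / (Cm + 1) with hδ''def
    have hδ''pos : 0 < δ'' := by positivity
    -- radius outside which ‖ι f₀‖ is small
    have hev : ∀ᶠ t in cocompact ℝ, ‖ι f₀ t‖ < δ'' := by
      have h1 : Tendsto (fun t => ‖ι f₀ t‖) (cocompact ℝ) (nhds 0) := by
        simpa using hg0.norm
      exact h1.eventually_lt_const hδ''pos
    obtain ⟨sc, hsc_cpt, hsub⟩ := mem_cocompact.mp hev
    obtain ⟨R, hR⟩ := hsc_cpt.isBounded.subset_closedBall 0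
    -- small η making ‖ι f₀‖ small where |τ| is close to 1
    have hclaim : ∃ j : ℕ, ∀ x ∈ Metric.closedBall (0:ℝ) (R+1),
        1 - 1/(j+2 : ℝ) ≤ ‖τ x‖ → ‖ι f₀ x‖ ≤ δ'' := by
      by_contra hcon
      push_neg at hcon
      set Z : ℕ → Set ℝ := fun j => {x | x ∈ Metric.closedBall (0:ℝ) (R+1) ∧
        1 - 1/(j+2 : ℝ) ≤ ‖τ x‖ ∧ δ'' ≤ ‖ι f₀ x‖} with hZdef
      have hZclosed : ∀ j, IsClosed (Z j) := by
        intro j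
        refine (Metric.isClosed_closedBall).inter (IsClosed.inter ?_ ?_)
        · exact isClosed_le continuous_const (continuous_norm.comp hτ_cont)
        · exact isClosed_le continuous_const (continuous_norm.comp hgc)
      have hZcompact : IsCompact (Z 0) :=
        (isCompact_closedBall _ _).of_isClosed_subset (hZclosed 0) (fun x hx => hx.1)
      have hZsub : ∀ j, Z (j+1) ⊆ Z j := by
        intro j x hx
        refine ⟨hx.1, le_trans ?_ hx.2.1, hx.2.2⟩
        have : 1/((j:ℝ)+1+2) ≤ 1/((j:ℝ)+2) := by
          apply one_div_le_one_div_of_le <;> linarith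
        push_cast
        linarith
      have hZne : ∀ j, (Z j).Nonempty := by
        intro j
        obtain ⟨x, hx1, hx2, hx3⟩ := hcon j
        exact ⟨x, hx1, hx2, le_of_lt hx3⟩
      obtain ⟨x, hx⟩ := IsCompact.nonempty_iInter_of_sequence_nonempty_isCompact_isClosed
        Z hZsub hZne hZcompact hZclosed
      simp only [Set.mem_iInter] at hx
      have h1 : 1 ≤ ‖τ x‖ := by
        by_contra h
        push_neg at h
        obtain ⟨j, hj⟩ := exists_nat_one_div_lt (by linarith : 0 < 1 - ‖τ x‖)
        have := (hx j).2.1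
        have hj2 : 1/((j:ℝ)+2) ≤ 1/((j:ℝ)+1) := by
          apply one_div_le_one_div_of_le <;> linarith
        linarith
      have h2 : δ'' ≤ ‖ι f₀ x‖ := (hx 0).2.2
      rw [hvanish x h1] at h2
      simp at h2
      linarith
    obtain ⟨jη, hjη⟩ := hclaim
    set η : ℝ := 1/(jη+2 : ℝ) with hηdef
    have hηpos : 0 < η := by positivity
    have hηhalf : η ≤ 1/2 := by
      rw [hηdef]
      apply one_div_le_one_div_of_le
      · linarith
      · push_cast
        linarith
    -- Urysohn function
    set F : Set ℝ := Metric.closedBall (0:ℝ) R ∩ {x | ‖τ x‖ ≤ 1 - η} with hFdef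
    set U : Set ℝ := Metric.ball (0:ℝ) (R+1) ∩ {x | ‖τ x‖ < 1 - η/2} with hUdef
    have hFcpt : IsCompact F := (isCompact_closedBall _ _).inter_right
      (isClosed_le (continuous_norm.comp hτ_cont) continuous_const)
    have hUopen : IsOpen U := Metric.isOpen_ball.inter
      (isOpen_lt (continuous_norm.comp hτ_cont) continuous_const)
    have hFU : F ⊆ U := by
      rintro x ⟨hx1, hx2⟩
      constructor
      · rw [Metric.mem_closedBall] at hx1
        rw [Metric.mem_ball]
        linarith
      · have : (1:ℝ) - η < 1 - η/2 := by linarith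
        exact lt_of_le_of_lt hx2 this
    obtain ⟨ρ, hρ1, hρ0, hρcs, hρIcc⟩ := exists_continuous_one_zero_of_isCompact
      hFcpt hUopen.isClosed_compl (Set.disjoint_left.mpr fun x hxF hxc => hxc (hFU hxF))
    -- the approximating element
    have hρsupp : ∀ x, ρ x ≠ 0 → x ∈ U := by
      intro x hx
      by_contra hxc
      exact hx (hρ0 hxc)
    set g₁ : ℝ → ℂ := fun x => ι f₀ x * (ρ x : ℂ) with hg₁def
    have hg₁cont : Continuous g₁ := hgc.mul (Complex.continuous_ofReal.comp ρ.continuous)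
    have hg₁cs : HasCompactSupport g₁ := by
      have hcs : HasCompactSupport (fun x => (ρ x : ℂ)) :=
        hρcs.comp_left (g := Complex.ofReal) rfl
      exact hcs.mul_left
    obtain ⟨f₁, hf₁⟩ := hmk g₁ hg₁cont hg₁cs ⟨1 - η/2, by linarith, by linarith,
      fun t ht => by
        have hρt : ρ t ≠ 0 := by
          intro h
          apply ht
          rw [hg₁def]
          simp [h]
        exact le_of_lt (hρsupp t hρt).2⟩
    refine ⟨f₁, Metric.closedBall (0:ℝ) (R+1) ∩ {x | ‖τ x‖ ≤ 1 - η/2},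
      1 - η/2, ?_, by linarith, by linarith, fun t ht => ht.2, ?_, ?_⟩
    · exact (isCompact_closedBall _ _).inter_right
        (isClosed_le (continuous_norm.comp hτ_cont) continuous_const)
    · intro x hx
      rw [hf₁] at hx
      have hρx : ρ x ≠ 0 := by
        intro h
        apply hx
        rw [hg₁def]
        simp [h]
      obtain ⟨h1, h2⟩ := hρsupp x hρx
      have h2' : ‖τ x‖ < 1 - η/2 := h2
      exact ⟨Metric.ball_subset_closedBall h1, le_of_lt h2'⟩
    -- the norm estimate
    · have hιdiff : ∀ t, ι (f₀ - f₁) t = ι f₀ t * ((1:ℂ) - (ρ t : ℂ)) := by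
        intro t
        rw [map_sub, Pi.sub_apply, hf₁, hg₁def]
        ring
      have hbound_all : ∀ k, (⨆ t : ℝ, ‖ι (f₀ - f₁) t * τ t ^ k‖) ≤ s k := by
        intro k
        refine Real.iSup_le (fun t => ?_) (hsk_nonneg f₀ k)
        rw [hιdiff]
        have h1 : ‖(1:ℂ) - (ρ t : ℂ)‖ ≤ 1 := by
          have := hρIcc t
          rw [show (1:ℂ) - (ρ t : ℂ) = ((1 - ρ t : ℝ) : ℂ) by push_cast; ring,
            Complex.norm_real, Real.norm_eq_abs, abs_of_nonneg (by linarith [this.2])]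
          linarith [this.1]
        calc ‖ι f₀ t * ((1:ℂ) - (ρ t : ℂ)) * τ t ^ k‖
            = ‖ι f₀ t * τ t ^ k‖ * ‖(1:ℂ) - (ρ t : ℂ)‖ := by
              rw [mul_right_comm, norm_mul]
          _ ≤ ‖ι f₀ t * τ t ^ k‖ * 1 := by
              exact mul_le_mul_of_nonneg_left h1 (norm_nonneg _)
          _ = ‖ι f₀ t * τ t ^ k‖ := mul_one _
          _ ≤ s k := le_ciSup (hbddA f₀ k) t
      have hbound_small : ∀ k < m, (⨆ t : ℝ, ‖ι (f₀ - f₁) t * τ t ^ k‖) ≤ δ' := by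
        intro k hk
        refine Real.iSup_le (fun t => ?_) (le_of_lt hδ'pos)
        rw [hιdiff]
        by_cases hρt : ρ t = 1
        · rw [hρt]
          simpa using le_of_lt hδ'pos
        · have htF : t ∉ F := fun h => hρt (hρ1 h)
          have hsmall : ‖ι f₀ t‖ ≤ δ'' := by
            by_cases htR : t ∈ Metric.closedBall (0:ℝ) R
            · have hτt : ¬ ‖τ t‖ ≤ 1 - η := fun h => htF ⟨htR, h⟩
              push_neg at hτt
              by_cases htR1 : t ∈ Metric.closedBall (0:ℝ) (R+1)
              · exact hjη t htR1 (le_of_lt hτt)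
              · exfalso
                apply htR1
                rw [Metric.mem_closedBall] at htR ⊢
                linarith
            · have : t ∉ sc := fun h => htR (hR h)
              exact le_of_lt (hsub this)
          have hτpow : ‖τ t‖ ^ k ≤ Cm := by
            calc ‖τ t‖ ^ k ≤ (max 1 Cτ) ^ k := by
                  exact pow_le_pow_left₀ (norm_nonneg _)
                    (le_trans (hCτ t) (le_max_right _ _)) k
              _ ≤ (max 1 Cτ) ^ m :=
                  pow_le_pow_right₀ (le_max_left _ _) (le_of_lt hk)
          have h1 : ‖(1:ℂ) - (ρ t : ℂ)‖ ≤ 1 := by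
            have := hρIcc t
            rw [show (1:ℂ) - (ρ t : ℂ) = ((1 - ρ t : ℝ) : ℂ) by push_cast; ring,
              Complex.norm_real, Real.norm_eq_abs, abs_of_nonneg (by linarith [this.2])]
            linarith [this.1]
          calc ‖ι f₀ t * ((1:ℂ) - (ρ t : ℂ)) * τ t ^ k‖
              = ‖ι f₀ t‖ * ‖(1:ℂ) - (ρ t : ℂ)‖ * ‖τ t‖ ^ k := by
                simp [norm_mul, norm_pow]
            _ ≤ δ'' * 1 * Cm := by
                refine mul_le_mul (mul_le_mul hsmall h1 (norm_nonneg _) (le_of_lt hδ''pos))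
                  hτpow (pow_nonneg (norm_nonneg _) k) (by positivity)
            _ = δ' * (Cm / (Cm + 1)) := by
                rw [hδ''def]; field_simp
            _ ≤ δ' * 1 := by
                refine mul_le_mul_of_nonneg_left ?_ (le_of_lt hδ'pos)
                rw [div_le_one (by linarith)]
                linarith
            _ = δ' := mul_one _
      have hsummable : Summable (fun k : ℕ => ⨆ t : ℝ, ‖ι (f₀ - f₁) t * τ t ^ k‖) :=
        (hmem (f₀ - f₁)).2.2
      rw [hnorm (f₀ - f₁)]
      rw [← Summable.sum_add_tsum_nat_add m hsummable]
      have hpart1 : ∑ k ∈ range m, (⨆ t : ℝ, ‖ι (f₀ - f₁) t * τ t ^ k‖) ≤ m * δ' := by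
        calc ∑ k ∈ range m, (⨆ t : ℝ, ‖ι (f₀ - f₁) t * τ t ^ k‖)
            ≤ ∑ _k ∈ range m, δ' :=
              Finset.sum_le_sum fun k hk => hbound_small k (mem_range.mp hk)
          _ = m * δ' := by rw [Finset.sum_const, card_range, nsmul_eq_mul]
      have hpart2 : (∑' k, ⨆ t : ℝ, ‖ι (f₀ - f₁) t * τ t ^ (k + m)‖) ≤ ∑' k, s (k + m) := by
        refine Summable.tsum_le_tsum (fun k => hbound_all (k + m)) ((summable_nat_add_iff m).2 hsummable)
          ((summable_nat_add_iff m).2 hgsum)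
      have hmδ' : (m:ℝ) * δ' < δ/2 := by
        have h2 : (m:ℝ)/(m+1) < 1 := by
          rw [div_lt_one (by positivity)]
          linarith
        calc (m:ℝ) * δ' = δ/2 * ((m:ℝ)/(m+1)) := by
              rw [hδ'def]
              have hne : (m:ℝ) + 1 ≠ 0 := by positivity
              field_simp
          _ < δ/2 * 1 := mul_lt_mul_of_pos_left h2 (half_pos hδ)
          _ = δ/2 := mul_one _
      linarith [hpart1, hpart2, hm]
  constructor
  · -- semi-transitive → weight condition
    intro hsemi ε hε0 hε1 K hK hKτ
    by_cases hKne : K.Nonempty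
    case neg =>
      have hKe : K = ∅ := Set.not_nonempty_iff_eq_empty.mp hKne
      refine ⟨fun k => k + 1, fun a b hab => by simpa using hab,
        fun k => Nat.succ_le_succ (Nat.zero_le k), ?_⟩
      simp only [hKe, Set.image_empty, Real.sSup_empty, mul_zero]
      exact tendsto_const_nhds
    case pos =>
    obtain ⟨s₀, hs₀⟩ := hKne
    set ε' := (1 + ε)/2 with hε'def
    have hε'pos : 0 < ε' := by rw [hε'def]; linarith
    have hε'lt1 : ε' < 1 := by rw [hε'def]; linarith
    have hεε' : ε < ε' := by rw [hε'def]; linarith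
    set U : Set ℝ := {x | ‖τ x‖ < ε'} with hUdef
    have hUopen : IsOpen U := isOpen_lt (continuous_norm.comp hτ_cont) continuous_const
    have hKU : K ⊆ U := fun x hx => lt_of_le_of_lt (hKτ x hx) hεε'
    obtain ⟨φ, hφ1, hφ0, hφcs, hφIcc⟩ := exists_continuous_one_zero_of_isCompact
      hK hUopen.isClosed_compl (Set.disjoint_left.mpr fun x hxK hxc => hxc (hKU hxK))
    obtain ⟨Φ, hΦ⟩ := hmk (fun x => (φ x : ℂ))
      (Complex.continuous_ofReal.comp φ.continuous)
      (hφcs.comp_left (g := Complex.ofReal) rfl)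
      ⟨ε', le_of_lt hε'pos, hε'lt1, fun t ht => by
        by_contra hc
        push_neg at hc
        have htU : t ∈ Uᶜ := fun h => absurd h (not_lt.mpr hc.le)
        refine ht ?_
        show ((φ t : ℝ) : ℂ) = 0
        rw [hφ0 htU]
        norm_num⟩
    set L := tsupport (⇑φ) with hLdef
    have hLcpt : IsCompact L := hφcs
    have hKL : K ⊆ L := by
      intro x hx
      apply subset_closure
      have h1 : φ x = 1 := hφ1 hx
      simp [Function.mem_support, h1]
    obtain ⟨N, hN0, hNdisj⟩ := haper L hLcpt
    have hΦs₀ : ι Φ s₀ = 1 := by rw [hΦ]; simp [hφ1 hs₀]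
    have hΦne : Φ ≠ 0 := by
      intro h
      rw [h, map_zero] at hΦs₀
      simpa using hΦs₀
    have heval : ∀ (F G : 𝓐) (t : ℝ), ‖ι F t - ι G t‖ ≤ ‖F - G‖ := by
      intro F G t
      have := hptw (F - G) t
      rwa [map_sub, Pi.sub_apply] at this
    -- no eigenvector along Φ
    have heig : ∀ n : ℕ, 1 ≤ n → ∀ μ : ℂ, μ • (T ^ n) Φ ≠ Φ := by
      intro n hn μ hcontra
      by_cases hμ : μ = 0
      · rw [hμ, zero_smul] at hcontra
        exact hΦne hcontra.symm
      · have hstep : ∀ t, ι Φ t ≠ 0 → ι Φ ((⇑α)^[n] t) ≠ 0 := by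
          intro t h0 hc2
          have h3 : ι (μ • (T ^ n) Φ) t = ι Φ t := by rw [hcontra]
          rw [map_smul, Pi.smul_apply, hTpow, hc2, mul_zero, smul_zero] at h3
          exact h0 h3.symm
        have horb : ∀ m : ℕ, ι Φ ((⇑α)^[m * n] s₀) ≠ 0 := by
          intro m
          induction m with
          | zero =>
            simp only [Nat.zero_mul, Function.iterate_zero_apply, hΦs₀]
            exact one_ne_zero
          | succ m ih =>
            have hmn : (m+1) * n = n + m * n := by ring
            rw [hmn, Function.iterate_add_apply]
            exact hstep _ ih
        have hmem1 : (⇑α)^[N * n] s₀ ∈ (⇑α)^[N * n] '' L := ⟨s₀, hKL hs₀, rfl⟩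
        have hmem2 : (⇑α)^[N * n] s₀ ∈ L := by
          have h4 := horb N
          simp only [hΦ] at h4
          have hsupp : φ ((⇑α)^[N * n] s₀) ≠ 0 := by
            intro h
            apply h4
            rw [h]
            norm_num
          exact subset_closure (Function.mem_support.mpr hsupp)
        have hge : N * n ≥ N := Nat.le_mul_of_pos_right N hn
        have h5 := hNdisj (N * n) hge
        rw [Set.eq_empty_iff_forall_notMem] at h5
        exact h5 _ ⟨hmem1, hmem2⟩
    -- quantitative threshold for each fixed n
    have hδn : ∀ n : ℕ, 1 ≤ n → ∃ d : ℝ, 0 < d ∧ ∀ (lam : ℂ) (f : 𝓐),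
        ‖f - Φ‖ < d → ‖lam • (T ^ n) f - Φ‖ < d → False := by
      intro n hn
      set c' := ‖(T ^ n) Φ‖ with hc'def
      have hc'pos : 0 < c' := by
        rw [hc'def, norm_pos_iff]
        intro h
        apply hΦne
        have h2 := hSTpow n Φ
        rw [h, map_zero] at h2
        exact h2.symm
      set O := ‖(T ^ n : 𝓐 →L[ℂ] 𝓐)‖ with hOdef
      have hOpos : 0 ≤ O := norm_nonneg _
      set Cn := max ((‖Φ‖ + 1) / (c' / 2)) 0 with hCndef
      have hCn0 : 0 ≤ Cn := le_max_right _ _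
      have hcont : Continuous fun lam : ℂ => ‖lam • (T ^ n) Φ - Φ‖ :=
        ((continuous_id.smul continuous_const).sub continuous_const).norm
      obtain ⟨μ₀, hμ₀mem, hμ₀min⟩ := (isCompact_closedBall (0:ℂ) Cn).exists_isMinOn
        ⟨0, Metric.mem_closedBall_self hCn0⟩ hcont.continuousOn
      set dm := ‖μ₀ • (T ^ n) Φ - Φ‖ with hdmdef
      have hdmpos : 0 < dm := by
        rw [hdmdef, norm_pos_iff, sub_ne_zero]
        exact heig n hn μ₀
      have hc2pos : 0 < c' / (2 * (O + 1)) := by positivity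
      have hdm2pos : 0 < dm / (2 * (1 + Cn * O)) := by positivity
      refine ⟨min (min 1 (c' / (2 * (O + 1)))) (dm / (2 * (1 + Cn * O))),
        lt_min (lt_min one_pos hc2pos) hdm2pos, ?_⟩
      intro lam f h1 h2
      set d := min (min 1 (c' / (2 * (O + 1)))) (dm / (2 * (1 + Cn * O))) with hddef
      have hdpos : 0 < d := lt_min (lt_min one_pos hc2pos) hdm2pos
      have hd1 : d ≤ 1 := le_trans (min_le_left _ _) (min_le_left _ _)
      have hd2 : d ≤ c' / (2 * (O + 1)) := le_trans (min_le_left _ _) (min_le_right _ _)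
      have hd3 : d ≤ dm / (2 * (1 + Cn * O)) := min_le_right _ _
      have hTf : ‖(T ^ n) f - (T ^ n) Φ‖ ≤ O * d := by
        rw [← map_sub]
        calc ‖(T ^ n) (f - Φ)‖ ≤ O * ‖f - Φ‖ := ContinuousLinearMap.le_opNorm _ _
          _ ≤ O * d := mul_le_mul_of_nonneg_left h1.le hOpos
      have hTfn : c'/2 ≤ ‖(T ^ n) f‖ := by
        have h3 : c' - ‖(T ^ n) f‖ ≤ ‖(T ^ n) f - (T ^ n) Φ‖ := by
          have h4 := norm_sub_norm_le ((T ^ n) Φ) ((T ^ n) f)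
          rw [norm_sub_rev ((T ^ n) Φ)] at h4
          linarith
        have h4 : O * d ≤ c'/2 := by
          have h5 : O / (O + 1) ≤ 1 := by
            rw [div_le_one (by positivity)]
            linarith
          calc O * d ≤ O * (c' / (2 * (O + 1))) := mul_le_mul_of_nonneg_left hd2 hOpos
            _ = c'/2 * (O / (O+1)) := by field_simp
            _ ≤ c'/2 * 1 := mul_le_mul_of_nonneg_left h5 (by positivity)
            _ = c'/2 := mul_one _
        linarith
      have hlam_bound : ‖lam‖ ≤ Cn := by
        have h5 : ‖lam • (T ^ n) f‖ ≤ ‖Φ‖ + d := by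
          have h6 := norm_sub_norm_le (lam • (T ^ n) f) Φ
          linarith
        rw [norm_smul] at h5
        have h6 : ‖lam‖ * (c'/2) ≤ ‖Φ‖ + 1 := by
          have h7 := mul_le_mul_of_nonneg_left hTfn (norm_nonneg lam)
          linarith
        have h7 : ‖lam‖ ≤ (‖Φ‖ + 1) / (c'/2) := by
          rw [le_div_iff₀ (by positivity)]
          exact h6
        exact le_trans h7 (le_max_left _ _)
      have hμmin : dm ≤ ‖lam • (T ^ n) Φ - Φ‖ := by
        have hlam_mem : lam ∈ Metric.closedBall (0:ℂ) Cn := by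
          rw [Metric.mem_closedBall, dist_zero_right]
          exact hlam_bound
        exact hμ₀min hlam_mem
      have h8 : ‖lam • (T ^ n) Φ - Φ‖ ≤ d + Cn * (O * d) := by
        have hdecomp : lam • (T ^ n) Φ - Φ
            = (lam • (T ^ n) f - Φ) - lam • ((T ^ n) f - (T ^ n) Φ) := by
          rw [smul_sub]
          abel
        rw [hdecomp]
        calc ‖(lam • (T ^ n) f - Φ) - lam • ((T ^ n) f - (T ^ n) Φ)‖
            ≤ ‖lam • (T ^ n) f - Φ‖ + ‖lam • ((T ^ n) f - (T ^ n) Φ)‖ := norm_sub_le _ _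
          _ ≤ d + Cn * (O * d) := by
              refine add_le_add h2.le ?_
              rw [norm_smul]
              calc ‖lam‖ * ‖(T ^ n) f - (T ^ n) Φ‖ ≤ ‖lam‖ * (O * d) :=
                    mul_le_mul_of_nonneg_left hTf (norm_nonneg _)
                _ ≤ Cn * (O * d) :=
                    mul_le_mul_of_nonneg_right hlam_bound (by positivity)
      have h10 : d * (1 + Cn * O) ≤ dm / 2 := by
        have h11 : (0:ℝ) < 1 + Cn * O := by positivity
        calc d * (1 + Cn * O) ≤ (dm / (2 * (1 + Cn * O))) * (1 + Cn * O) :=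
              mul_le_mul_of_nonneg_right hd3 h11.le
          _ = dm / 2 := by field_simp
      have h12 : d + Cn * (O * d) = d * (1 + Cn * O) := by ring
      linarith
    -- uniform threshold for all n < N
    have hδ₀ex : ∀ m : ℕ, ∃ δ₀ : ℝ, 0 < δ₀ ∧ ∀ n : ℕ, 1 ≤ n → n < m → ∀ (lam : ℂ) (f : 𝓐),
        ‖f - Φ‖ < δ₀ → ‖lam • (T ^ n) f - Φ‖ < δ₀ → False := by
      intro m
      induction m with
      | zero => exact ⟨1, one_pos, fun n hn hnm => absurd hnm (by omega)⟩
      | succ m ih =>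
        obtain ⟨δ₀, hδ₀pos, hδ₀⟩ := ih
        by_cases hm : 1 ≤ m
        · obtain ⟨d, hdpos, hd⟩ := hδn m hm
          refine ⟨min δ₀ d, lt_min hδ₀pos hdpos, ?_⟩
          intro n hn hnm lam f h1 h2
          by_cases hnm' : n < m
          · exact hδ₀ n hn hnm' lam f (lt_of_lt_of_le h1 (min_le_left _ _))
              (lt_of_lt_of_le h2 (min_le_left _ _))
          · have hnm'' : n = m := by omega
            subst hnm''
            exact hd lam f (lt_of_lt_of_le h1 (min_le_right _ _))
              (lt_of_lt_of_le h2 (min_le_right _ _))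
        · refine ⟨δ₀, hδ₀pos, ?_⟩
          intro n hn hnm lam f h1 h2
          omega
    obtain ⟨δ₀, hδ₀pos, hδ₀⟩ := hδ₀ex N
    set aK : ℕ → ℝ :=
      fun n => sSup ((fun t => ∏ j ∈ range n, w ((⇑α.symm)^[n - j] t)) '' K) with haKdef
    set bK : ℕ → ℝ :=
      fun n => sSup ((fun t => ∏ j ∈ range n, (w ((⇑α)^[j] t))⁻¹) '' K) with hbKdef
    have haKpos : ∀ n, 0 < aK n := fun n =>
      lt_of_lt_of_le (prodA_pos n s₀)
        (le_csSup ((hK.image (prodA_cont n)).bddAbove) ⟨s₀, hs₀, rfl⟩)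
    have hbKpos : ∀ n, 0 < bK n := fun n =>
      lt_of_lt_of_le (prodB_pos n s₀)
        (le_csSup ((hK.image (prodB_cont n)).bddAbove) ⟨s₀, hs₀, rfl⟩)
    have hmain : ∀ δ : ℝ, 0 < δ → δ ≤ 1/2 → δ < δ₀ →
        ∃ n : ℕ, N ≤ n ∧ aK n * bK n ≤ (δ / (1 - δ))^2 := by
      intro δ hδpos hδhalf hδδ₀
      obtain ⟨n, lam, hn1, hlamne, f, hfO₁, hfO₂⟩ := hsemi (Metric.ball Φ δ) (Metric.ball Φ δ)
        Metric.isOpen_ball Metric.isOpen_ball ⟨Φ, Metric.mem_ball_self hδpos⟩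
        ⟨Φ, Metric.mem_ball_self hδpos⟩
      rw [Metric.mem_ball, dist_eq_norm] at hfO₁ hfO₂
      have hnN : N ≤ n := by
        by_contra hc
        push_neg at hc
        exact hδ₀ n hn1 hc lam f (lt_trans hfO₁ hδδ₀) (lt_trans hfO₂ hδδ₀)
      have hdisj := hNdisj n hnN
      rw [Set.eq_empty_iff_forall_notMem] at hdisj
      have h1δ : 0 < 1 - δ := by linarith
      have hlampos : 0 < ‖lam‖ := norm_pos_iff.mpr hlamne
      have hb_est : ∀ t ∈ K, ∏ j ∈ range n, (w ((⇑α)^[j] t))⁻¹ ≤ ‖lam‖ * (δ / (1 - δ)) := by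
        intro t ht
        have hαt : (⇑α)^[n] t ∉ L := fun hc => hdisj ((⇑α)^[n] t) ⟨⟨t, hKL ht, rfl⟩, hc⟩
        have hφz : ι Φ ((⇑α)^[n] t) = 0 := by
          have h0 : φ ((⇑α)^[n] t) = 0 := image_eq_zero_of_notMem_tsupport hαt
          simp only [hΦ]
          exact_mod_cast h0
        have hfv : ‖ι f ((⇑α)^[n] t)‖ ≤ δ := by
          have h2 := heval f Φ ((⇑α)^[n] t)
          rw [hφz, sub_zero] at h2
          exact le_of_lt (lt_of_le_of_lt h2 hfO₁)
        have hev2 : ‖ι (lam • (T ^ n) f) t - ι Φ t‖ < δ :=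
          lt_of_le_of_lt (heval _ _ t) hfO₂
        have hΦt : ι Φ t = 1 := by rw [hΦ]; simp [hφ1 ht]
        rw [hΦt, map_smul, Pi.smul_apply, hTpow] at hev2
        set P := ∏ j ∈ range n, w ((⇑α)^[j] t) with hPdef
        have hPpos : 0 < P := Finset.prod_pos fun j _ => hw_pos _
        have hnorm1 : 1 - δ ≤ ‖lam • ((↑P : ℂ) * ι f ((⇑α)^[n] t))‖ := by
          have h := norm_sub_norm_le (1:ℂ) (lam • ((↑P:ℂ) * ι f ((⇑α)^[n] t)))
          rw [norm_one, norm_sub_rev] at h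
          linarith
        have hnorm2 : ‖lam • ((↑P:ℂ) * ι f ((⇑α)^[n] t))‖ ≤ ‖lam‖ * P * δ := by
          rw [norm_smul, norm_mul, Complex.norm_real, Real.norm_eq_abs, abs_of_pos hPpos]
          calc ‖lam‖ * (P * ‖ι f ((⇑α)^[n] t)‖) ≤ ‖lam‖ * (P * δ) := by
                refine mul_le_mul_of_nonneg_left ?_ (norm_nonneg _)
                exact mul_le_mul_of_nonneg_left hfv hPpos.le
            _ = ‖lam‖ * P * δ := by ring
        have hkey : 1 - δ ≤ ‖lam‖ * P * δ := le_trans hnorm1 hnorm2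
        rw [Finset.prod_inv_distrib]
        have h2 : P⁻¹ * (1 - δ) ≤ ‖lam‖ * δ := by
          rw [inv_mul_le_iff₀ hPpos]
          have h3 : P * (‖lam‖ * δ) = ‖lam‖ * P * δ := by ring
          linarith
        have h3 : ‖lam‖ * (δ / (1 - δ)) = (‖lam‖ * δ) / (1 - δ) := by ring
        rw [h3, le_div_iff₀ h1δ]
        exact h2
      have hbK_le : bK n ≤ ‖lam‖ * (δ / (1 - δ)) := by
        refine csSup_le ⟨_, ⟨s₀, hs₀, rfl⟩⟩ ?_
        rintro x ⟨t, ht, rfl⟩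
        exact hb_est t ht
      have ha_est : ∀ s ∈ K,
          ∏ j ∈ range n, w ((⇑α.symm)^[n - j] s) ≤ δ / ((1 - δ) * ‖lam‖) := by
        intro s hs
        have hαt : (⇑α)^[n] ((⇑α.symm)^[n] s) = s := iter_cancel α n s
        have htL : (⇑α.symm)^[n] s ∉ L := by
          intro hc
          exact hdisj s ⟨⟨(⇑α.symm)^[n] s, hc, hαt⟩, hKL hs⟩
        have hΦt : ι Φ ((⇑α.symm)^[n] s) = 0 := by
          have h0 : φ ((⇑α.symm)^[n] s) = 0 := image_eq_zero_of_notMem_tsupport htL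
          simp only [hΦ]
          exact_mod_cast h0
        have hΦs : ι Φ s = 1 := by rw [hΦ]; simp [hφ1 hs]
        have hfs : 1 - δ ≤ ‖ι f s‖ := by
          have h := heval f Φ s
          rw [hΦs] at h
          have h2 := norm_sub_norm_le (1:ℂ) (ι f s)
          rw [norm_one, norm_sub_rev] at h2
          have h3 := lt_of_le_of_lt h hfO₁
          linarith
        have hev2 : ‖ι (lam • (T ^ n) f) ((⇑α.symm)^[n] s)‖ < δ := by
          have h2 := lt_of_le_of_lt (heval (lam • (T ^ n) f) Φ ((⇑α.symm)^[n] s)) hfO₂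
          rwa [hΦt, sub_zero] at h2
        rw [map_smul, Pi.smul_apply, hTpow, hαt] at hev2
        set P := ∏ j ∈ range n, w ((⇑α)^[j] ((⇑α.symm)^[n] s)) with hPdef
        have hPpos : 0 < P := Finset.prod_pos fun j _ => hw_pos _
        have hPnorm : ‖lam • ((↑P:ℂ) * ι f s)‖ = ‖lam‖ * P * ‖ι f s‖ := by
          rw [norm_smul, norm_mul, Complex.norm_real, Real.norm_eq_abs, abs_of_pos hPpos]
          ring
        have hkey : ‖lam‖ * P * (1 - δ) ≤ δ := by
          calc ‖lam‖ * P * (1 - δ) ≤ ‖lam‖ * P * ‖ι f s‖ :=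
                mul_le_mul_of_nonneg_left hfs (by positivity)
            _ = ‖lam • ((↑P:ℂ) * ι f s)‖ := hPnorm.symm
            _ ≤ δ := hev2.le
        have hPeq : ∏ j ∈ range n, w ((⇑α.symm)^[n - j] s) = P := by
          rw [hPdef]
          refine Finset.prod_congr rfl fun j hj => ?_
          rw [iter_mixed α (le_of_lt (mem_range.mp hj))]
        rw [hPeq, le_div_iff₀ (by positivity)]
        calc P * ((1 - δ) * ‖lam‖) = ‖lam‖ * P * (1 - δ) := by ring
          _ ≤ δ := hkey
      have haK_le : aK n ≤ δ / ((1 - δ) * ‖lam‖) := by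
        refine csSup_le ⟨_, ⟨s₀, hs₀, rfl⟩⟩ ?_
        rintro x ⟨t, ht, rfl⟩
        exact ha_est t ht
      refine ⟨n, hnN, ?_⟩
      calc aK n * bK n ≤ (δ / ((1 - δ) * ‖lam‖)) * (‖lam‖ * (δ / (1 - δ))) :=
            mul_le_mul haK_le hbK_le (le_of_lt (hbKpos n)) (by positivity)
        _ = (δ / (1 - δ))^2 := by
            have hl : ‖lam‖⁻¹ * ‖lam‖ = 1 := inv_mul_cancel₀ hlampos.ne'
            calc (δ / ((1 - δ) * ‖lam‖)) * (‖lam‖ * (δ / (1 - δ)))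
                = (‖lam‖⁻¹ * ‖lam‖) * ((δ/(1-δ)) * (δ/(1-δ))) := by
                  rw [div_eq_mul_inv δ ((1-δ) * ‖lam‖), mul_inv]
                  ring
              _ = (δ / (1 - δ))^2 := by rw [hl]; ring
    -- choosing arbitrarily large n with small products
    have hsel0 : ∀ c : ℝ, 0 < c → ∃ n, N ≤ n ∧ aK n * bK n ≤ c := by
      intro c hc
      set δ := min (min (1/4) (δ₀/2)) (Real.sqrt c / 2) with hδdef
      have hδ4 : δ ≤ 1/4 := le_trans (min_le_left _ _) (min_le_left _ _)
      have hδpos : 0 < δ :=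
        lt_min (lt_min (by norm_num) (by positivity)) (half_pos (Real.sqrt_pos.mpr hc))
      have hδhalf : δ ≤ 1/2 := by linarith
      have hδδ₀ : δ < δ₀ :=
        lt_of_le_of_lt (le_trans (min_le_left _ _) (min_le_right _ _)) (by linarith)
      obtain ⟨n, hnN, hq⟩ := hmain δ hδpos hδhalf hδδ₀
      refine ⟨n, hnN, le_trans hq ?_⟩
      have h1 : δ / (1 - δ) ≤ 2 * δ := by
        rw [div_le_iff₀ (by linarith)]
        nlinarith
      have h2 : δ ≤ Real.sqrt c / 2 := min_le_right _ _
      have h4 : 2 * δ ≤ Real.sqrt c := by linarith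
      have h5 : 0 ≤ δ / (1 - δ) := div_nonneg hδpos.le (by linarith)
      calc (δ/(1-δ))^2 ≤ (2*δ)^2 := by nlinarith
        _ ≤ (Real.sqrt c)^2 := by nlinarith
        _ = c := Real.sq_sqrt hc.le
    have hsel : ∀ (m : ℕ) (c : ℝ), 0 < c → ∃ n, N ≤ n ∧ m < n ∧ aK n * bK n ≤ c := by
      intro m c hc
      by_cases hIcc : (Finset.Icc N m).Nonempty
      · set q := (Finset.Icc N m).inf' hIcc (fun j => aK j * bK j) with hqdef
        have hqpos : 0 < q :=
          (Finset.lt_inf'_iff hIcc).mpr fun j _ => mul_pos (haKpos j) (hbKpos j)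
        obtain ⟨n, hnN, hle⟩ := hsel0 (min c (q/2)) (lt_min hc (half_pos hqpos))
        refine ⟨n, hnN, ?_, le_trans hle (min_le_left _ _)⟩
        by_contra hcon
        push_neg at hcon
        have hmem : n ∈ Finset.Icc N m := Finset.mem_Icc.mpr ⟨hnN, hcon⟩
        have h6 : q ≤ aK n * bK n := Finset.inf'_le _ hmem
        have h7 := le_trans hle (min_le_right _ _)
        linarith
      · obtain ⟨n, hnN, hle⟩ := hsel0 c hc
        refine ⟨n, hnN, ?_, hle⟩
        by_contra hcon
        push_neg at hcon
        exact hIcc ⟨n, Finset.mem_Icc.mpr ⟨hnN, hcon⟩⟩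
    choose F hFN hFlt hFle using hsel
    have hpos1 : ∀ k : ℕ, (0:ℝ) < 1/((k:ℝ)+1) := fun k => by positivity
    set nf : ℕ → ℕ := fun k =>
      Nat.rec (F 0 1 one_pos) (fun k ih => F ih (1/((k:ℝ)+2)) (by positivity)) k with hnfdef
    have hnfsucc : ∀ k : ℕ, nf (k+1) = F (nf k) (1/((k:ℝ)+2)) (by positivity) := fun k => rfl
    have hnfN : ∀ k, N ≤ nf k := by
      intro k
      cases k with
      | zero => exact hFN 0 1 one_pos
      | succ k => rw [hnfsucc]; exact hFN _ _ _
    have hmono : StrictMono nf := by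
      apply strictMono_nat_of_lt_succ
      intro k
      rw [hnfsucc]
      exact hFlt _ _ _
    have hbd : ∀ k : ℕ, aK (nf k) * bK (nf k) ≤ 1/((k:ℝ)+1) := by
      intro k
      cases k with
      | zero =>
        have := hFle 0 1 one_pos
        simp only [Nat.cast_zero, zero_add, div_one]; exact this
      | succ k =>
        rw [hnfsucc]
        have := hFle (nf k) (1/((k:ℝ)+2)) (by positivity)
        have hcast : (1:ℝ)/((k:ℝ)+2) ≤ 1/(((k+1:ℕ):ℝ)+1) := by push_cast; ring_nf; exact le_refl _
        exact le_trans this hcast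
    refine ⟨nf, hmono, fun k => le_trans hN0 (hnfN k), ?_⟩
    have hlo : ∀ k, 0 ≤ aK (nf k) * bK (nf k) :=
      fun k => (mul_pos (haKpos _) (hbKpos _)).le
    have h0 : Tendsto (fun k : ℕ => 1/((k:ℝ)+1)) atTop (nhds 0) :=
      tendsto_one_div_add_atTop_nhds_zero_nat
    exact tendsto_of_tendsto_of_tendsto_of_le_of_le tendsto_const_nhds h0 hlo hbd
  · -- weight condition → semi-transitive
    intro hcond O₁ O₂ hO₁ hO₂ hne₁ hne₂
    obtain ⟨f₀, hf₀⟩ := hne₁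
    obtain ⟨g₀, hg₀⟩ := hne₂
    obtain ⟨r₁, hr₁pos, hball₁⟩ := Metric.isOpen_iff.mp hO₁ f₀ hf₀
    obtain ⟨r₂, hr₂pos, hball₂⟩ := Metric.isOpen_iff.mp hO₂ g₀ hg₀
    set r := min r₁ r₂ with hrdef
    have hrpos : 0 < r := lt_min hr₁pos hr₂pos
    have hrr₁ : r ≤ r₁ := min_le_left _ _
    have hrr₂ : r ≤ r₂ := min_le_right _ _
    obtain ⟨f₁, K₁, ε₁, hK₁cpt, hε₁0, hε₁1, hK₁τ, hsupp₁, hclose₁⟩ :=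
      happrox f₀ (r/2) (by positivity)
    obtain ⟨g₁, K₂, ε₂, hK₂cpt, hε₂0, hε₂1, hK₂τ, hsupp₂, hclose₂⟩ :=
      happrox g₀ (r/2) (by positivity)
    set K := K₁ ∪ K₂ with hKdef
    have hKcpt : IsCompact K := hK₁cpt.union hK₂cpt
    set ε := max ε₁ ε₂ with hεdef
    have hε0 : 0 < ε := lt_of_lt_of_le hε₁0 (le_max_left _ _)
    have hε1 : ε < 1 := max_lt hε₁1 hε₂1
    have hKτ : ∀ t ∈ K, ‖τ t‖ ≤ ε := by
      rintro t (ht | ht)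
      · exact le_trans (hK₁τ t ht) (le_max_left _ _)
      · exact le_trans (hK₂τ t ht) (le_max_right _ _)
    by_cases hKne : K.Nonempty
    · obtain ⟨nseq, hmono, hn1, htend⟩ := hcond ε hε0 hε1 K hKcpt hKτ
      set θ := ((r/2)^2) / ((‖f₁‖ + 1) * (‖g₁‖ + 1)) with hθdef
      have hθpos : 0 < θ := by positivity
      obtain ⟨k, hk⟩ := (htend.eventually_lt_const hθpos).exists
      set n₀ := nseq k with hn₀def
      set a := sSup ((fun t => ∏ j ∈ range n₀, w ((⇑α.symm)^[n₀ - j] t)) '' K) with hadef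
      set b := sSup ((fun t => ∏ j ∈ range n₀, (w ((⇑α)^[j] t))⁻¹) '' K) with hbdef
      obtain ⟨s₀, hs₀⟩ := hKne
      have hbddA' : BddAbove ((fun t => ∏ j ∈ range n₀, w ((⇑α.symm)^[n₀ - j] t)) '' K) :=
        (hKcpt.image (prodA_cont n₀)).bddAbove
      have hbddB' : BddAbove ((fun t => ∏ j ∈ range n₀, (w ((⇑α)^[j] t))⁻¹) '' K) :=
        (hKcpt.image (prodB_cont n₀)).bddAbove
      have hapos : 0 < a := lt_of_lt_of_le (prodA_pos n₀ s₀) (le_csSup hbddA' ⟨s₀, hs₀, rfl⟩)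
      have hbpos : 0 < b := lt_of_lt_of_le (prodB_pos n₀ s₀) (le_csSup hbddB' ⟨s₀, hs₀, rfl⟩)
      set X := b * (‖g₁‖ + 1) with hXdef
      set Y := a * (‖f₁‖ + 1) with hYdef
      have hXpos : 0 < X := by positivity
      have hYpos : 0 < Y := by positivity
      have hXY : X * Y < (r/2)^2 := by
        have h2 : (0:ℝ) < (‖f₁‖ + 1) * (‖g₁‖ + 1) := by positivity
        calc X * Y = (a*b) * ((‖f₁‖+1)*(‖g₁‖+1)) := by rw [hXdef, hYdef]; ring
          _ < θ * ((‖f₁‖+1)*(‖g₁‖+1)) := mul_lt_mul_of_pos_right hk h2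
          _ = (r/2)^2 := by
              rw [hθdef]
              field_simp
      set lam := Real.sqrt (X / Y) with hlamdef
      have hlampos : 0 < lam := Real.sqrt_pos.mpr (by positivity)
      have hkey1 : lam * Y < r / 2 := by
        have h1 : (lam * Y)^2 = X * Y := by
          rw [mul_pow, hlamdef, Real.sq_sqrt (by positivity : (0:ℝ) ≤ X / Y)]
          field_simp
        have h2 : lam * Y = Real.sqrt (X * Y) := by
          rw [← Real.sqrt_sq (by positivity : (0:ℝ) ≤ lam * Y), h1]
        rw [h2]
        exact (Real.sqrt_lt' (by positivity)).mpr hXY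
      have hkey2 : lam⁻¹ * X < r / 2 := by
        have h1 : (lam⁻¹ * X)^2 = X * Y := by
          rw [mul_pow, hlamdef, ← Real.sqrt_inv, Real.sq_sqrt (by positivity : (0:ℝ) ≤ (X / Y)⁻¹)]
          field_simp
        have h2 : lam⁻¹ * X = Real.sqrt (X * Y) := by
          rw [← Real.sqrt_sq (by positivity : (0:ℝ) ≤ lam⁻¹ * X), h1]
        rw [h2]
        exact (Real.sqrt_lt' (by positivity)).mpr hXY
      have hlamC : ((lam:ℂ)) ≠ 0 := by exact_mod_cast hlampos.ne'
      have hnormlam : ‖((lam:ℂ))‖ = lam := by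
        rw [Complex.norm_real, Real.norm_eq_abs, abs_of_pos hlampos]
      refine ⟨n₀, (lam : ℂ), hn1 k, hlamC, ?_⟩
      set u := f₁ + (lam:ℂ)⁻¹ • (S ^ n₀) g₁ with hudef
      have hTnu : (lam:ℂ) • (T ^ n₀) u = (lam:ℂ) • (T ^ n₀) f₁ + g₁ := by
        rw [hudef, map_add, map_smul, hTSpow, smul_add, smul_smul,
          mul_inv_cancel₀ hlamC, one_smul]
      have hSn_norm : ‖(S ^ n₀) g₁‖ ≤ b * ‖g₁‖ :=
        hSbound n₀ K hKcpt ⟨s₀, hs₀⟩ g₁ (fun s hs => Set.mem_union_right _ (hsupp₂ s hs))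
      have hTn_norm : ‖(T ^ n₀) f₁‖ ≤ a * ‖f₁‖ :=
        hTbound n₀ K hKcpt ⟨s₀, hs₀⟩ f₁ (fun s hs => Set.mem_union_left _ (hsupp₁ s hs))
      refine ⟨u, ?_, ?_⟩
      · apply hball₁
        rw [Metric.mem_ball, dist_eq_norm]
        have hsplit : u - f₀ = (f₁ - f₀) + (lam:ℂ)⁻¹ • (S ^ n₀) g₁ := by
          rw [hudef]; abel
        have hmain : ‖u - f₀‖ < r := by
          rw [hsplit]
          have h1 : ‖f₁ - f₀‖ < r/2 := by rw [norm_sub_rev]; exact hclose₁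
          have h2 : ‖(lam:ℂ)⁻¹ • (S ^ n₀) g₁‖ < r/2 := by
            rw [norm_smul, norm_inv, hnormlam]
            calc lam⁻¹ * ‖(S ^ n₀) g₁‖ ≤ lam⁻¹ * (b * ‖g₁‖) :=
                  mul_le_mul_of_nonneg_left hSn_norm (inv_nonneg.mpr hlampos.le)
              _ ≤ lam⁻¹ * X := by
                  refine mul_le_mul_of_nonneg_left ?_ (inv_nonneg.mpr hlampos.le)
                  rw [hXdef]
                  exact mul_le_mul_of_nonneg_left (by linarith) hbpos.le
              _ < r/2 := hkey2
          calc ‖(f₁ - f₀) + (lam:ℂ)⁻¹ • (S ^ n₀) g₁‖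
              ≤ ‖f₁ - f₀‖ + ‖(lam:ℂ)⁻¹ • (S ^ n₀) g₁‖ := norm_add_le _ _
            _ < r/2 + r/2 := add_lt_add h1 h2
            _ = r := by ring
        exact lt_of_lt_of_le hmain hrr₁
      · apply hball₂
        rw [Metric.mem_ball, dist_eq_norm, hTnu]
        have hsplit : (lam:ℂ) • (T ^ n₀) f₁ + g₁ - g₀ = (g₁ - g₀) + (lam:ℂ) • (T ^ n₀) f₁ := by
          abel
        have hmain : ‖(lam:ℂ) • (T ^ n₀) f₁ + g₁ - g₀‖ < r := by
          rw [hsplit]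
          have h1 : ‖g₁ - g₀‖ < r/2 := by rw [norm_sub_rev]; exact hclose₂
          have h2 : ‖(lam:ℂ) • (T ^ n₀) f₁‖ < r/2 := by
            rw [norm_smul, hnormlam]
            calc lam * ‖(T ^ n₀) f₁‖ ≤ lam * (a * ‖f₁‖) :=
                  mul_le_mul_of_nonneg_left hTn_norm hlampos.le
              _ ≤ lam * Y := by
                  refine mul_le_mul_of_nonneg_left ?_ hlampos.le
                  rw [hYdef]
                  exact mul_le_mul_of_nonneg_left (by linarith) hapos.le
              _ < r/2 := hkey1
          calc ‖(g₁ - g₀) + (lam:ℂ) • (T ^ n₀) f₁‖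
              ≤ ‖g₁ - g₀‖ + ‖(lam:ℂ) • (T ^ n₀) f₁‖ := norm_add_le _ _
            _ < r/2 + r/2 := add_lt_add h1 h2
            _ = r := by ring
        exact lt_of_lt_of_le hmain hrr₂
    · have hKempty : K = ∅ := Set.not_nonempty_iff_eq_empty.mp hKne
      have hK₁e : K₁ = ∅ := by
        rw [hKdef] at hKempty
        exact (Set.union_empty_iff.mp hKempty).1
      have hK₂e : K₂ = ∅ := by
        rw [hKdef] at hKempty
        exact (Set.union_empty_iff.mp hKempty).2
      have hf₁0 : f₁ = 0 := by
        apply hι_inj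
        rw [map_zero]
        funext s
        by_contra h
        have := hsupp₁ s h
        rw [hK₁e] at this
        exact this
      have hg₁0 : g₁ = 0 := by
        apply hι_inj
        rw [map_zero]
        funext s
        by_contra h
        have := hsupp₂ s h
        rw [hK₂e] at this
        exact this
      refine ⟨1, 1, le_refl 1, one_ne_zero, f₁, ?_, ?_⟩
      · apply hball₁
        rw [Metric.mem_ball, dist_eq_norm, norm_sub_rev]
        calc ‖f₀ - f₁‖ < r/2 := hclose₁
          _ ≤ r := by linarith
          _ ≤ r₁ := hrr₁
      · apply hball₂
        rw [hf₁0]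
        have h0 : (1:ℂ) • (T ^ 1) (0:𝓐) = 0 := by simp
        rw [Metric.mem_ball, h0]
        have h1 : ‖g₀ - g₁‖ < r/2 := hclose₂
        rw [hg₁0, sub_zero] at h1
        rw [dist_zero_left]
        calc ‖g₀‖ < r/2 := h1
          _ ≤ r := by linarith
          _ ≤ r₂ := hrr₂
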